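/- Let f be differentiable on an interval containing [u,v] with 0 ≤ u < v, 0 ≤ λ, μ ≤ 1, f' integrable, and |f'|^r s-convex in the second sense on [u,v] for some s ∈ (0,1], with r ≥ 1. Define E = 2(2-λ)^(s+2) + (λ-1)(s + 2^(s+2) + 2) + 2^(s+1) s λ - 1, L = 2λ^(s+2) + s(1-λ) - 2λ + 1, I = 2μ^(s+2) + s(1-μ) - 2μ + 1, F = 2(2-μ)^(s+2) + (μ-1)(s + 2^(s+2) + 2) + 2^(s+1) s μ - 1. Then |(λ f(u) + μ f(v))/2 + ((2-λ-μ)/2) f((u+v)/2) - (1/(v-u)) ∫ᵤᵛ f(x) dx| ≤ ((v-u)/8) (1/(2^(s-1)(s+1)(s+2)))^(1/r) · { (2λ²-2λ+1)^(1-1/r) [E |f'(u)|^r + L |f'(v)|^r]^(1/r) + (2μ²-2μ+1)^(1-1/r) [I |f'(u)|^r + F |f'(v)|^r]^(1/r) }. -/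

import Mathlib

open MeasureTheory intervalIntegral

/-- `g` is s-convex in the second sense on `[u, v]`. -/
def SConvexSecond (s u v : ℝ) (g : ℝ → ℝ) : Prop :=
  ∀ x ∈ Set.Icc u v, ∀ y ∈ Set.Icc u v, ∀ a ∈ Set.Icc (0:ℝ) 1,
    g (a * x + (1 - a) * y) ≤ a ^ s * g x + (1 - a) ^ s * g y


lemma contA (l : ℝ) : Continuous (fun t : ℝ => |t - l|) :=
  continuous_abs.comp (continuous_id.sub continuous_const)

lemma contP (p : ℝ) (hp : 0 ≤ p) : Continuous (fun t : ℝ => t ^ p) :=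
  Real.continuous_rpow_const hp

lemma calcA (l : ℝ) (hl0 : 0 ≤ l) (hl1 : l ≤ 1) :
    ∫ t in (0:ℝ)..1, |t - l| = (2*l^2 - 2*l + 1)/2 := by
  rw [← integral_add_adjacent_intervals (a := 0) (b := l) (c := 1)
    ((contA l).intervalIntegrable _ _) ((contA l).intervalIntegrable _ _)]
  have e1 : ∫ t in (0:ℝ)..l, |t - l| = ∫ t in (0:ℝ)..l, (l - t) := by
    refine integral_congr fun t ht => ?_
    rw [Set.uIcc_of_le hl0] at ht
    rw [abs_of_nonpos (by linarith [ht.2]), neg_sub]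
  have e2 : ∫ t in l..(1:ℝ), |t - l| = ∫ t in l..(1:ℝ), (t - l) := by
    refine integral_congr fun t ht => ?_
    rw [Set.uIcc_of_le hl1] at ht
    rw [abs_of_nonneg (by linarith [ht.1])]
  rw [e1, e2, integral_sub (intervalIntegrable_const) intervalIntegrable_id,
    integral_sub intervalIntegrable_id (intervalIntegrable_const),
    integral_id, integral_id, intervalIntegral.integral_const, intervalIntegral.integral_const]
  simp only [smul_eq_mul]
  ring

lemma piece1 (l s : ℝ) (hl0 : 0 ≤ l) (hs0 : 0 < s) :
    ∫ t in (0:ℝ)..l, (l - t) * t ^ s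
      = l * (l^(s+1)/(s+1)) - l^(s+2)/(s+2) := by
  have hs1 : (0:ℝ) < s + 1 := by linarith
  have hs2 : (0:ℝ) < s + 2 := by linarith
  have c1 : Continuous (fun t : ℝ => l * t ^ s) := continuous_const.mul (contP s hs0.le)
  have c2 : Continuous (fun t : ℝ => t ^ (s+1)) := contP _ (by linarith)
  have e : ∫ t in (0:ℝ)..l, (l - t) * t ^ s
      = ∫ t in (0:ℝ)..l, (l * t ^ s - t ^ (s+1)) := by
    refine integral_congr fun t ht => ?_
    rw [Set.uIcc_of_le hl0] at ht
    rw [Real.rpow_add_one' ht.1 (by linarith)]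
    ring
  rw [e, integral_sub (c1.intervalIntegrable _ _) (c2.intervalIntegrable _ _),
    intervalIntegral.integral_const_mul, integral_rpow (Or.inl (by linarith)),
    integral_rpow (Or.inl (by linarith)),
    Real.zero_rpow (by positivity : s + 1 ≠ 0), show s+1+1 = s+2 from by ring,
    Real.zero_rpow (by positivity : s + 2 ≠ 0)]
  ring_nf

lemma piece2 (l s : ℝ) (hl0 : 0 ≤ l) (hl1 : l ≤ 1) (hs0 : 0 < s) :
    ∫ t in l..(1:ℝ), (t - l) * t ^ s
      = (1 - l^(s+2))/(s+2) - l * ((1 - l^(s+1))/(s+1)) := by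
  have hs1 : (0:ℝ) < s + 1 := by linarith
  have hs2 : (0:ℝ) < s + 2 := by linarith
  have c1 : Continuous (fun t : ℝ => l * t ^ s) := continuous_const.mul (contP s hs0.le)
  have c2 : Continuous (fun t : ℝ => t ^ (s+1)) := contP _ (by linarith)
  have e : ∫ t in l..(1:ℝ), (t - l) * t ^ s
      = ∫ t in l..(1:ℝ), (t ^ (s+1) - l * t ^ s) := by
    refine integral_congr fun t ht => ?_
    rw [Set.uIcc_of_le hl1] at ht
    rw [Real.rpow_add_one' (le_trans hl0 ht.1) (by positivity)]
    ring
  rw [e, integral_sub (c2.intervalIntegrable _ _) (c1.intervalIntegrable _ _),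
    intervalIntegral.integral_const_mul, integral_rpow (Or.inl (by linarith)),
    integral_rpow (Or.inl (by linarith)), show s+1+1 = s+2 from by ring,
    Real.one_rpow, Real.one_rpow]

lemma calcB (l s : ℝ) (hl0 : 0 ≤ l) (hl1 : l ≤ 1) (hs0 : 0 < s) :
    ∫ t in (0:ℝ)..1, |t - l| * t ^ s
      = (2*l^(s+2) + s*(1-l) - 2*l + 1)/((s+1)*(s+2)) := by
  have hs1 : (0:ℝ) < s + 1 := by linarith
  have hs2 : (0:ℝ) < s + 2 := by linarith
  have cc : Continuous (fun t : ℝ => |t - l| * t ^ s) :=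
    (contA l).mul (contP s hs0.le)
  rw [← integral_add_adjacent_intervals (a := 0) (b := l) (c := 1)
    (cc.intervalIntegrable _ _) (cc.intervalIntegrable _ _)]
  have e1 : ∫ t in (0:ℝ)..l, |t - l| * t ^ s = ∫ t in (0:ℝ)..l, (l - t) * t ^ s := by
    refine integral_congr fun t ht => ?_
    rw [Set.uIcc_of_le hl0] at ht
    rw [abs_of_nonpos (by linarith [ht.2]), neg_sub]
  have e2 : ∫ t in l..(1:ℝ), |t - l| * t ^ s = ∫ t in l..(1:ℝ), (t - l) * t ^ s := by
    refine integral_congr fun t ht => ?_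
    rw [Set.uIcc_of_le hl1] at ht
    rw [abs_of_nonneg (by linarith [ht.1])]
  rw [e1, e2, piece1 l s hl0 hs0, piece2 l s hl0 hl1 hs0]
  have hb : l ^ (s+2) = l ^ (s+1) * l := by
    rw [show s+2 = (s+1)+1 from by ring, Real.rpow_add_one' hl0 (by positivity)]
  rw [hb]
  field_simp
  ring

lemma contQ (p : ℝ) (hp : 0 ≤ p) : Continuous (fun t : ℝ => (2 - t) ^ p) :=
  (contP p hp).comp (continuous_const.sub continuous_id)

lemma int_two_sub (p a b : ℝ) (hp : 0 < p) :
    ∫ t in a..b, (2 - t) ^ p = ((2-a)^(p+1) - (2-b)^(p+1))/(p+1) := by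
  rw [integral_comp_sub_left (fun x => x ^ p) 2, integral_rpow (Or.inl (by linarith))]

lemma calcC (l s : ℝ) (hl0 : 0 ≤ l) (hl1 : l ≤ 1) (hs0 : 0 < s) :
    ∫ t in (0:ℝ)..1, |t - l| * (2 - t) ^ s
      = (2*(2-l)^(s+2) + (l-1)*(s + 2^(s+2) + 2) + 2^(s+1)*s*l - 1)/((s+1)*(s+2)) := by
  have hs1 : (0:ℝ) < s + 1 := by linarith
  have hs2 : (0:ℝ) < s + 2 := by linarith
  have cc : Continuous (fun t : ℝ => |t - l| * (2 - t) ^ s) :=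
    (contA l).mul (contQ s hs0.le)
  have c1 : Continuous (fun t : ℝ => (2 - t) ^ (s+1)) := contQ _ (by linarith)
  have c2 : Continuous (fun t : ℝ => (2-l) * (2 - t) ^ s) := continuous_const.mul (contQ s hs0.le)
  have hrel : ∀ t : ℝ, t ≤ 1 → (2 - t) ^ (s+1) = (2 - t) ^ s * (2 - t) := fun t ht =>
    Real.rpow_add_one' (by linarith) (by positivity)
  rw [← integral_add_adjacent_intervals (a := 0) (b := l) (c := 1)
    (cc.intervalIntegrable _ _) (cc.intervalIntegrable _ _)]
  have e1 : ∫ t in (0:ℝ)..l, |t - l| * (2 - t) ^ s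
      = ∫ t in (0:ℝ)..l, ((2 - t) ^ (s+1) - (2-l) * (2 - t) ^ s) := by
    refine integral_congr fun t ht => ?_
    rw [Set.uIcc_of_le hl0] at ht
    rw [abs_of_nonpos (by linarith [ht.2]), hrel t (le_trans ht.2 hl1)]
    ring
  have e2 : ∫ t in l..(1:ℝ), |t - l| * (2 - t) ^ s
      = ∫ t in l..(1:ℝ), ((2-l) * (2 - t) ^ s - (2 - t) ^ (s+1)) := by
    refine integral_congr fun t ht => ?_
    rw [Set.uIcc_of_le hl1] at ht
    rw [abs_of_nonneg (by linarith [ht.1]), hrel t ht.2]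
    ring
  rw [e1, e2, integral_sub (c1.intervalIntegrable _ _) (c2.intervalIntegrable _ _),
    integral_sub (c2.intervalIntegrable _ _) (c1.intervalIntegrable _ _),
    intervalIntegral.integral_const_mul, intervalIntegral.integral_const_mul,
    int_two_sub (s+1) 0 l (by linarith), int_two_sub s 0 l hs0,
    int_two_sub (s+1) l 1 (by linarith), int_two_sub s l 1 hs0]
  have h2l : (2:ℝ) - l > 0 := by linarith
  have hb : (2-l) ^ (s+2) = (2-l) ^ (s+1) * (2-l) := by
    rw [show s+2 = (s+1)+1 from by ring, Real.rpow_add_one h2l.ne']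
  have h2 : (2:ℝ) ^ (s+2) = 2 ^ (s+1) * 2 := by
    rw [show s+2 = (s+1)+1 from by ring, Real.rpow_add_one (by norm_num)]
  simp only [show (2:ℝ) - 0 = 2 from by ring, show s+1+1 = s+2 from by ring,
    show (2:ℝ) - 1 = 1 from by ring, Real.one_rpow]
  rw [hb, h2]
  field_simp
  ring

lemma powmean' {ν : Measure ℝ} [IsFiniteMeasure ν] {w g : ℝ → ℝ} {r : ℝ} (hr : 1 ≤ r)
    (hwm : AEStronglyMeasurable w ν) (hw0 : ∀ x, 0 ≤ w x)
    (hgm : AEStronglyMeasurable g ν) {Cw Cg : ℝ}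
    (hwb : ∀ᵐ x ∂ν, w x ≤ Cw) (hgb : ∀ᵐ x ∂ν, |g x| ≤ Cg) :
    ∫ x, w x * |g x| ∂ν ≤ (∫ x, w x ∂ν) ^ (1 - 1/r) * (∫ x, w x * |g x| ^ r ∂ν) ^ (1/r) := by
  rcases eq_or_lt_of_le hr with h1 | h1
  · subst h1
    simp [Real.rpow_natCast]
  · have hr0 : (0:ℝ) < r := lt_trans one_pos h1
    set p := r / (r - 1) with hp
    have hpq : p.HolderConjugate r := (Real.HolderConjugate.conjExponent h1).symm
    have hp1 : 1 < p := hpq.lt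
    have hp0 : (0:ℝ) < p := lt_trans one_pos hp1
    have hsum : 1/p + 1/r = 1 := by rw [one_div, one_div]; exact hpq.inv_add_inv_eq_one
    have hgm' : AEStronglyMeasurable (fun x => (w x) ^ (1/r) * |g x|) ν :=
      by simpa [Real.norm_eq_abs, Pi.mul_def] using
        ((hwm.aemeasurable.pow aemeasurable_const).mul hgm.norm.aemeasurable).aestronglyMeasurable
    have key := integral_mul_le_Lp_mul_Lq_of_nonneg hpq (μ := ν)
      (f := fun x => (w x) ^ (1/p)) (g := fun x => (w x) ^ (1/r) * |g x|)
      (Filter.Eventually.of_forall fun x => Real.rpow_nonneg (hw0 x) _)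
      (Filter.Eventually.of_forall fun x => mul_nonneg (Real.rpow_nonneg (hw0 x) _) (abs_nonneg _))
      ?_ ?_
    · have e1 : ∀ x, (w x) ^ (1/p) * ((w x) ^ (1/r) * |g x|) = w x * |g x| := by
        intro x
        rw [← mul_assoc, ← Real.rpow_add' (hw0 x) (by rw [hsum]; norm_num), hsum, Real.rpow_one]
      have e2 : ∀ x, ((w x) ^ (1/p)) ^ p = w x := by
        intro x
        rw [← Real.rpow_mul (hw0 x), one_div, inv_mul_cancel₀ hp0.ne', Real.rpow_one]
      have e3 : ∀ x, ((w x) ^ (1/r) * |g x|) ^ r = w x * |g x| ^ r := by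
        intro x
        rw [Real.mul_rpow (Real.rpow_nonneg (hw0 x) _) (abs_nonneg _),
          ← Real.rpow_mul (hw0 x), one_div, inv_mul_cancel₀ hr0.ne', Real.rpow_one]
      simp only [e1, e2, e3] at key
      have : 1 - 1/r = 1/p := by linarith
      rw [this]
      exact key
    · refine MemLp.of_bound ((hwm.aemeasurable.pow aemeasurable_const).aestronglyMeasurable)
        ((max Cw 1) ^ (1/p)) ?_
      filter_upwards [hwb] with x hwx
      rw [Real.norm_of_nonneg (Real.rpow_nonneg (hw0 x) _)]
      exact Real.rpow_le_rpow (hw0 x) (le_trans hwx (le_max_left _ _)) (by positivity)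
    · refine MemLp.of_bound hgm' ((max Cw 1) ^ (1/r) * max Cg 0) ?_
      filter_upwards [hgb, hwb] with x hx hwx
      rw [Real.norm_of_nonneg (mul_nonneg (Real.rpow_nonneg (hw0 x) _) (abs_nonneg _))]
      exact mul_le_mul
        (Real.rpow_le_rpow (hw0 x) (le_trans hwx (le_max_left _ _)) (by positivity))
        (le_trans hx (le_max_left _ _)) (abs_nonneg _) (by positivity)


lemma aux {g : ℝ → ℝ} {A B l s r : ℝ} (hl0 : 0 ≤ l) (hl1 : l ≤ 1)
    (hs0 : 0 < s) (hr : 1 ≤ r)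
    (hgi : IntervalIntegrable g volume 0 1)
    (hA : 0 ≤ A) (hB : 0 ≤ B)
    (hg : ∀ t ∈ Set.Ioc (0:ℝ) 1, |g t| ^ r ≤ (1 - t/2)^s * A + (t/2)^s * B) :
    |∫ t in (0:ℝ)..1, (t - l) * g t|
      ≤ (1/2) * (1/(2^(s-1)*((s+1)*(s+2))))^(1/r) *
        ((2*l^2 - 2*l + 1) ^ (1-1/r) *
          ((2*(2-l)^(s+2) + (l-1)*(s + 2^(s+2) + 2) + 2^(s+1)*s*l - 1) * A
            + (2*l^(s+2) + s*(1-l) - 2*l + 1) * B) ^ (1/r)) := by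
  have hr0 : (0:ℝ) < r := lt_of_lt_of_le one_pos hr
  have hs1 : (0:ℝ) < s + 1 := by linarith
  have hs2 : (0:ℝ) < s + 2 := by linarith
  set D : ℝ := (s+1)*(s+2) with hD
  have hDpos : 0 < D := mul_pos hs1 hs2
  set Ee : ℝ := 2*(2-l)^(s+2) + (l-1)*(s + 2^(s+2) + 2) + 2^(s+1)*s*l - 1 with hEe
  set Ll : ℝ := 2*l^(s+2) + s*(1-l) - 2*l + 1 with hLl
  set ν := volume.restrict (Set.Ioc (0:ℝ) 1) with hν
  haveI : IsFiniteMeasure ν := by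
    constructor
    rw [hν, Measure.restrict_apply_univ]
    simp [Real.volume_Ioc]
  have h2spos : (0:ℝ) < 2 ^ s := Real.rpow_pos_of_pos two_pos s
  -- pointwise bound function
  set φ : ℝ → ℝ := fun t => |t - l| * ((1 - t/2)^s * A + (t/2)^s * B) with hφ
  have hgmeas : AEStronglyMeasurable g ν := hgi.1.aestronglyMeasurable
  have hwcont : Continuous (fun t : ℝ => |t - l|) := contA l
  -- a.e. bound on |g|
  have hgae : ∀ᵐ t ∂ν, |g t| ≤ (A + B) ^ (1/r) := by
    rw [hν]
    filter_upwards [ae_restrict_mem measurableSet_Ioc] with t ht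
    have h1 : (1 - t/2)^s ≤ 1 :=
      Real.rpow_le_one (by linarith [ht.1, ht.2]) (by linarith [ht.1]) hs0.le
    have h2 : (t/2)^s ≤ 1 :=
      Real.rpow_le_one (by linarith [ht.1.le]) (by linarith [ht.2]) hs0.le
    have hb : |g t| ^ r ≤ A + B := by
      calc |g t| ^ r ≤ (1 - t/2)^s * A + (t/2)^s * B := hg t ht
        _ ≤ 1 * A + 1 * B := by
            gcongr
        _ = A + B := by ring
    have : (|g t| ^ r) ^ (1/r) ≤ (A + B) ^ (1/r) :=
      Real.rpow_le_rpow (Real.rpow_nonneg (abs_nonneg _) _) hb (by positivity)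
    rwa [← Real.rpow_mul (abs_nonneg _), mul_one_div, div_self hr0.ne', Real.rpow_one] at this
  -- step 1 : abs into integral
  have step1 : |∫ t in (0:ℝ)..1, (t - l) * g t| ≤ ∫ x, |x - l| * |g x| ∂ν := by
    refine le_trans (abs_integral_le_integral_abs zero_le_one) (le_of_eq ?_)
    rw [integral_of_le zero_le_one]
    exact setIntegral_congr_fun measurableSet_Ioc fun t _ => abs_mul _ _
  -- step 2 : power mean
  have step2 : ∫ x, |x - l| * |g x| ∂ν
      ≤ (∫ x, |x - l| ∂ν) ^ (1 - 1/r) * (∫ x, |x - l| * |g x| ^ r ∂ν) ^ (1/r) := by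
    refine powmean' hr hwcont.aestronglyMeasurable (fun x => abs_nonneg _) hgmeas
      (Cw := l + 1) ?_ hgae
    rw [hν]
    filter_upwards [ae_restrict_mem measurableSet_Ioc] with t ht
    rw [abs_sub_le_iff]
    constructor <;> [linarith [ht.2]; linarith [ht.1.le]]
  -- the weight integral
  have wint : ∫ x, |x - l| ∂ν = (2*l^2 - 2*l + 1)/2 := by
    rw [hν, ← intervalIntegral.integral_of_le zero_le_one]
    exact calcA l hl0 hl1
  -- bound the second integral
  have hφint : Integrable φ ν := by
    have : Continuous φ := by
      refine hwcont.mul (Continuous.add (Continuous.mul ?_ continuous_const)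
        (Continuous.mul ?_ continuous_const))
      · exact (contP s hs0.le).comp (continuous_const.sub (continuous_id.div_const 2))
      · exact (contP s hs0.le).comp (continuous_id.div_const 2)
    exact (this.intervalIntegrable 0 1).1
  have hgr_meas : AEStronglyMeasurable (fun x => |x - l| * |g x| ^ r) ν := by
    have : AEMeasurable (fun x => |x - l| * ‖g x‖ ^ r) ν :=
      (hwcont.aemeasurable).mul (hgmeas.norm.aemeasurable.pow aemeasurable_const)
    simpa [Real.norm_eq_abs] using this.aestronglyMeasurable
  have hgr_int : Integrable (fun x => |x - l| * |g x| ^ r) ν := by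
    rw [← memLp_one_iff_integrable]
    refine MemLp.of_bound hgr_meas ((l+1) * (A+B)) ?_
    rw [hν]
    filter_upwards [ae_restrict_mem measurableSet_Ioc] with t ht
    rw [Real.norm_of_nonneg (mul_nonneg (abs_nonneg _) (Real.rpow_nonneg (abs_nonneg _) _))]
    have h1 : (1 - t/2)^s ≤ 1 :=
      Real.rpow_le_one (by linarith [ht.1, ht.2]) (by linarith [ht.1]) hs0.le
    have h2 : (t/2)^s ≤ 1 :=
      Real.rpow_le_one (by linarith [ht.1.le]) (by linarith [ht.2]) hs0.le
    have hb : |g t| ^ r ≤ A + B := by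
      calc |g t| ^ r ≤ (1 - t/2)^s * A + (t/2)^s * B := hg t ht
        _ ≤ 1 * A + 1 * B := by gcongr
        _ = A + B := by ring
    have hw : |t - l| ≤ l + 1 := by
      rw [abs_sub_le_iff]; constructor <;> [linarith [ht.2]; linarith [ht.1.le]]
    exact mul_le_mul hw hb (Real.rpow_nonneg (abs_nonneg _) _) (by linarith [hl0])
  have step3 : ∫ x, |x - l| * |g x| ^ r ∂ν ≤ ∫ x, φ x ∂ν := by
    refine integral_mono_ae hgr_int hφint ?_
    rw [hν]
    filter_upwards [ae_restrict_mem measurableSet_Ioc] with t ht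
    exact mul_le_mul_of_nonneg_left (hg t ht) (abs_nonneg _)
  -- compute ∫ φ
  have hφval : ∫ x, φ x ∂ν = (Ee * A + Ll * B)/(2^s * D) := by
    rw [hν, ← intervalIntegral.integral_of_le zero_le_one]
    have e : ∫ t in (0:ℝ)..1, φ t
        = ∫ t in (0:ℝ)..1, ((A/2^s) * (|t - l| * (2 - t)^s) + (B/2^s) * (|t - l| * t^s)) := by
      refine integral_congr fun t ht => ?_
      rw [Set.uIcc_of_le zero_le_one] at ht
      have e1 : (1 - t/2)^s = (2 - t)^s / 2^s := by
        rw [← Real.div_rpow (by linarith [ht.2]) (by norm_num : (0:ℝ) ≤ 2)]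
        ring_nf
      have e2 : (t/2)^s = t^s / 2^s := by
        rw [← Real.div_rpow ht.1 (by norm_num : (0:ℝ) ≤ 2)]
      rw [hφ]
      simp only
      rw [e1, e2]
      ring
    rw [e, intervalIntegral.integral_add, intervalIntegral.integral_const_mul,
      intervalIntegral.integral_const_mul,
      calcB l s hl0 hl1 hs0, calcC l s hl0 hl1 hs0]
    · rw [← hEe, ← hLl, ← hD]
      field_simp
    · exact (Continuous.intervalIntegrable (by
        exact continuous_const.mul ((contA l).mul (contQ s hs0.le))) _ _)
    · exact (Continuous.intervalIntegrable (by
        exact continuous_const.mul ((contA l).mul (contP s hs0.le))) _ _)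
  -- nonnegativity of Ee * A + Ll * B
  have hnum : 0 ≤ Ee * A + Ll * B := by
    have h0 : 0 ≤ ∫ x, φ x ∂ν := by
      rw [hν]
      refine setIntegral_nonneg measurableSet_Ioc fun t ht => mul_nonneg (abs_nonneg _) ?_
      have h1 : (0:ℝ) ≤ 1 - t/2 := by linarith [ht.2]
      have h2 : (0:ℝ) ≤ t/2 := by linarith [ht.1.le]
      positivity
    rw [hφval] at h0
    have := mul_nonneg h0 (le_of_lt (mul_pos h2spos hDpos))
    rwa [div_mul_cancel₀ _ (mul_pos h2spos hDpos).ne'] at this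
  -- assemble
  have main : |∫ t in (0:ℝ)..1, (t - l) * g t|
      ≤ ((2*l^2 - 2*l + 1)/2) ^ (1 - 1/r) * ((Ee * A + Ll * B)/(2^s * D)) ^ (1/r) := by
    refine le_trans step1 (le_trans step2 ?_)
    rw [wint]
    refine mul_le_mul_of_nonneg_left ?_ (Real.rpow_nonneg (by nlinarith [sq_nonneg (2*l-1)]) _)
    rw [← hφval]
    refine Real.rpow_le_rpow ?_ step3 (by positivity)
    refine integral_nonneg fun t => mul_nonneg (abs_nonneg _) (Real.rpow_nonneg (abs_nonneg _) _)
  refine le_trans main (le_of_eq ?_)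
  have hX : (0:ℝ) ≤ 2*l^2 - 2*l + 1 := by nlinarith [sq_nonneg (2*l-1)]
  rw [Real.div_rpow hX (by norm_num : (0:ℝ) ≤ 2),
    Real.div_rpow hnum (le_of_lt (mul_pos h2spos hDpos))]
  have c1 : (2:ℝ) ^ (1 - 1/r) = 2 / 2 ^ (1/r) := by
    rw [Real.rpow_sub two_pos, Real.rpow_one]
  have c2 : ((1:ℝ)/(2^(s-1)*D))^(1/r) = 2 ^ (1/r) / (2^s * D) ^ (1/r) := by
    have e : (1:ℝ)/(2^(s-1)*D) = 2 / (2^s * D) := by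
      rw [show s = (s-1)+1 from by ring, Real.rpow_add_one (by norm_num : (2:ℝ) ≠ 0)]
      rw [show (s-1)+1-1 = s-1 from by ring]
      field_simp
    rw [e, Real.div_rpow (by norm_num : (0:ℝ) ≤ 2) (le_of_lt (mul_pos h2spos hDpos))]
  rw [c2]
  rw [c1]
  have h2r : (0:ℝ) < 2 ^ (1/r) := Real.rpow_pos_of_pos two_pos _
  have hmulD : (0:ℝ) < (2^s * D) ^ (1/r) := Real.rpow_pos_of_pos (mul_pos h2spos hDpos) _
  field_simp

theorem stmt_14 (f f' : ℝ → ℝ) (u v l m r s : ℝ) (hu : 0 ≤ u) (huv : u < v)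
    (hl : l ∈ Set.Icc (0:ℝ) 1) (hm : m ∈ Set.Icc (0:ℝ) 1)
    (hs : s ∈ Set.Ioc (0:ℝ) 1) (hr : 1 ≤ r)
    (hd : ∀ x ∈ Set.Icc u v, HasDerivAt f (f' x) x)
    (hint : IntervalIntegrable f' volume u v)
    (hsc : SConvexSecond s u v (fun x => |f' x| ^ r))
    (E L I F : ℝ)
    (hE : E = 2 * (2 - l) ^ (s + 2) + (l - 1) * (s + 2 ^ (s + 2) + 2) + 2 ^ (s + 1) * s * l - 1)
    (hL : L = 2 * l ^ (s + 2) + s * (1 - l) - 2 * l + 1)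
    (hI : I = 2 * m ^ (s + 2) + s * (1 - m) - 2 * m + 1)
    (hF : F = 2 * (2 - m) ^ (s + 2) + (m - 1) * (s + 2 ^ (s + 2) + 2) + 2 ^ (s + 1) * s * m - 1) :
    |(l * f u + m * f v) / 2 + ((2 - l - m) / 2) * f ((u + v) / 2)
        - (1 / (v - u)) * ∫ x in u..v, f x|
      ≤ ((v - u) / 8) * (1 / (2 ^ (s - 1) * (s + 1) * (s + 2))) ^ (1 / r) *
          ((2 * l ^ 2 - 2 * l + 1) ^ (1 - 1 / r) *
              (E * |f' u| ^ r + L * |f' v| ^ r) ^ (1 / r)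
            + (2 * m ^ 2 - 2 * m + 1) ^ (1 - 1 / r) *
              (I * |f' u| ^ r + F * |f' v| ^ r) ^ (1 / r)) := by
  obtain ⟨hl0, hl1⟩ := hl
  obtain ⟨hm0, hm1⟩ := hm
  obtain ⟨hs0, hs1⟩ := hs
  set c : ℝ := (v - u)/2 with hc
  have hcpos : 0 < c := by rw [hc]; linarith
  set mid : ℝ := (u + v)/2 with hmid
  have humem : u ∈ Set.Icc u v := ⟨le_refl _, huv.le⟩
  have hvmem : v ∈ Set.Icc u v := ⟨huv.le, le_refl _⟩
  -- interval integrability of the composed derivatives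
  have hint1 : IntervalIntegrable (fun t => f' (c*t + u)) volume 0 1 := by
    have h1 : IntervalIntegrable f' volume u mid := by
      refine hint.mono_set ?_
      rw [Set.uIcc_of_le (by rw [hmid]; linarith), Set.uIcc_of_le huv.le]
      exact Set.Icc_subset_Icc (le_refl _) (by rw [hmid]; linarith)
    have h2 := h1.comp_add_right u
    rw [sub_self] at h2
    have e : mid - u = c := by rw [hmid, hc]; ring
    rw [e] at h2
    have h3 := h2.comp_mul_left (c := c)
    rw [zero_div, div_self hcpos.ne'] at h3
    exact h3
  have hint2 : IntervalIntegrable (fun t => f' (-c*t + v)) volume 0 1 := by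
    have h1 : IntervalIntegrable f' volume mid v := by
      refine hint.mono_set ?_
      rw [Set.uIcc_of_le (by rw [hmid]; linarith), Set.uIcc_of_le huv.le]
      exact Set.Icc_subset_Icc (by rw [hmid]; linarith) (le_refl _)
    have h2 := h1.comp_add_right v
    rw [sub_self] at h2
    have e : mid - v = -c := by rw [hmid, hc]; ring
    rw [e] at h2
    have h3 := h2.comp_mul_left (c := -c)
    rw [div_self (by simpa using hcpos.ne' : (-c) ≠ 0), zero_div] at h3
    exact h3.symm
  -- membership of affine images
  have hmem1 : ∀ t ∈ Set.uIcc (0:ℝ) 1, c*t + u ∈ Set.Icc u v := by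
    intro t ht
    rw [Set.uIcc_of_le zero_le_one] at ht
    constructor
    · nlinarith [ht.1, hcpos.le]
    · nlinarith [ht.2, hcpos.le]
  have hmem2 : ∀ t ∈ Set.uIcc (0:ℝ) 1, -c*t + v ∈ Set.Icc u v := by
    intro t ht
    rw [Set.uIcc_of_le zero_le_one] at ht
    constructor
    · nlinarith [ht.2, hcpos.le]
    · nlinarith [ht.1, hcpos.le]
  -- integration by parts
  have du1 : ∀ t : ℝ, t ∈ Set.uIcc (0:ℝ) 1 → HasDerivAt (fun t : ℝ => t - l) 1 t := by
    intro t _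
    simpa using (hasDerivAt_id t).sub_const l
  have du2 : ∀ t : ℝ, t ∈ Set.uIcc (0:ℝ) 1 → HasDerivAt (fun t : ℝ => t - m) 1 t := by
    intro t _
    simpa using (hasDerivAt_id t).sub_const m
  have dv1 : ∀ t : ℝ, t ∈ Set.uIcc (0:ℝ) 1 →
      HasDerivAt (fun t : ℝ => f (c*t + u)) (c * f' (c*t + u)) t := by
    intro t ht
    have h := (hd _ (hmem1 t ht)).comp t (((hasDerivAt_id t).const_mul c).add_const u)
    have e : c * f' (c*t + u) = f' (c*t + u) * (c * 1) := by ring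
    rw [e]
    exact h
  have dv2 : ∀ t : ℝ, t ∈ Set.uIcc (0:ℝ) 1 →
      HasDerivAt (fun t : ℝ => f (-c*t + v)) (-c * f' (-c*t + v)) t := by
    intro t ht
    have h := (hd _ (hmem2 t ht)).comp t (((hasDerivAt_id t).const_mul (-c)).add_const v)
    have e : -c * f' (-c*t + v) = f' (-c*t + v) * (-c * 1) := by ring
    rw [e]
    exact h
  have ibp1 := intervalIntegral.integral_mul_deriv_eq_deriv_mul (a := (0:ℝ)) (b := 1)
    (u := fun t : ℝ => t - l) (u' := fun _ => (1:ℝ)) (v := fun t : ℝ => f (c*t + u))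
    (v' := fun t : ℝ => c * f' (c*t + u)) du1 dv1
    intervalIntegrable_const (hint1.const_mul c)
  have ibp2 := intervalIntegral.integral_mul_deriv_eq_deriv_mul (a := (0:ℝ)) (b := 1)
    (u := fun t : ℝ => t - m) (u' := fun _ => (1:ℝ)) (v := fun t : ℝ => f (-c*t + v))
    (v' := fun t : ℝ => -c * f' (-c*t + v)) du2 dv2
    intervalIntegrable_const (hint2.const_mul (-c))
  -- substitution for the remaining integrals
  have sub1 : ∫ t in (0:ℝ)..1, f (c*t + u) = c⁻¹ * ∫ x in u..mid, f x := by
    rw [integral_comp_mul_add f hcpos.ne' u, smul_eq_mul,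
      show c*0 + u = u from by ring, show c*1 + u = mid from by rw [hmid, hc]; ring]
  have sub2 : ∫ t in (0:ℝ)..1, f (-c*t + v) = c⁻¹ * ∫ x in mid..v, f x := by
    rw [integral_comp_mul_add f (by simpa using hcpos.ne' : (-c) ≠ 0) v, smul_eq_mul,
      show -c*0 + v = v from by ring, show -c*1 + v = mid from by rw [hmid, hc]; ring,
      integral_symm]
    field_simp
  -- continuity of f on [u,v] and splitting of the integral
  have hfc : ∀ a b : ℝ, u ≤ a → a ≤ b → b ≤ v → IntervalIntegrable f volume a b := by
    intro a b ha hab hbv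
    refine ContinuousOn.intervalIntegrable ?_
    rw [Set.uIcc_of_le hab]
    intro x hx
    exact ((hd x ⟨le_trans ha hx.1, le_trans hx.2 hbv⟩).continuousAt).continuousWithinAt
  have hsplit : (∫ x in u..v, f x) = (∫ x in u..mid, f x) + ∫ x in mid..v, f x := by
    rw [integral_add_adjacent_intervals (hfc u mid (le_refl _) (by rw [hmid]; linarith)
      (by rw [hmid]; linarith)) (hfc mid v (by rw [hmid]; linarith) (by rw [hmid]; linarith)
      (le_refl _))]
  set P : ℝ := ∫ t in (0:ℝ)..1, (t - l) * f' (c*t + u) with hP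
  set Q : ℝ := ∫ t in (0:ℝ)..1, (t - m) * f' (-c*t + v) with hQ
  have eP : c * P = (1 - l) * f mid + l * f u - c⁻¹ * ∫ x in u..mid, f x := by
    rw [hP, ← intervalIntegral.integral_const_mul]
    have e : ∀ t : ℝ, c * ((t - l) * f' (c*t + u)) = (t - l) * (c * f' (c*t + u)) := by
      intro t; ring
    simp_rw [e]
    rw [ibp1, ← sub1]
    simp_rw [one_mul]
    rw [show c*1 + u = mid from by rw [hmid, hc]; ring, show c*0 + u = u from by ring]
    ring
  have eQ : -c * Q = (1 - m) * f mid + m * f v - c⁻¹ * ∫ x in mid..v, f x := by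
    rw [hQ, ← intervalIntegral.integral_const_mul]
    have e : ∀ t : ℝ, -c * ((t - m) * f' (-c*t + v)) = (t - m) * (-c * f' (-c*t + v)) := by
      intro t; ring
    simp_rw [e]
    rw [ibp2, ← sub2]
    simp_rw [one_mul]
    rw [show -c*1 + v = mid from by rw [hmid, hc]; ring, show -c*0 + v = v from by ring]
    ring
  have hinv : 1/(v - u) = c⁻¹/2 := by
    rw [hc]
    rw [show ((v-u)/2)⁻¹ = 2/(v-u) from by field_simp]
    ring
  have key : (l * f u + m * f v) / 2 + ((2 - l - m) / 2) * f mid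
      - (1 / (v - u)) * ∫ x in u..v, f x = (c * P + (-c * Q))/2 := by
    rw [hinv, hsplit, eP, eQ]
    ring
  rw [key]
  -- bounds on |P| and |Q| via aux
  have hAnn : (0:ℝ) ≤ |f' u| ^ r := Real.rpow_nonneg (abs_nonneg _) _
  have hBnn : (0:ℝ) ≤ |f' v| ^ r := Real.rpow_nonneg (abs_nonneg _) _
  have bP : |P| ≤ (1/2) * (1/(2^(s-1)*((s+1)*(s+2))))^(1/r) *
      ((2*l^2 - 2*l + 1) ^ (1-1/r) * (E * |f' u| ^ r + L * |f' v| ^ r) ^ (1/r)) := by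
    rw [hE, hL, hP]
    refine aux hl0 hl1 hs0 hr hint1 hAnn hBnn ?_
    intro t ht
    have hmem : (1 - t/2) ∈ Set.Icc (0:ℝ) 1 := ⟨by linarith [ht.2], by linarith [ht.1.le]⟩
    have h := hsc u humem v hvmem (1 - t/2) hmem
    simp only at h
    have harg : (1 - t/2) * u + (1 - (1 - t/2)) * v = c*t + u := by rw [hc]; ring
    rw [harg] at h
    have e2 : 1 - (1 - t/2) = t/2 := by ring
    rw [e2] at h
    exact h
  have bQ : |Q| ≤ (1/2) * (1/(2^(s-1)*((s+1)*(s+2))))^(1/r) *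
      ((2*m^2 - 2*m + 1) ^ (1-1/r) * (I * |f' u| ^ r + F * |f' v| ^ r) ^ (1/r)) := by
    rw [hI, hF, hQ]
    have := aux (g := fun t => f' (-c*t + v)) (A := |f' v| ^ r) (B := |f' u| ^ r)
      hm0 hm1 hs0 hr hint2 hBnn hAnn ?_
    · refine le_trans this (le_of_eq ?_)
      ring_nf
    · intro t ht
      have hmem : (1 - t/2) ∈ Set.Icc (0:ℝ) 1 := ⟨by linarith [ht.2], by linarith [ht.1.le]⟩
      have h := hsc v hvmem u humem (1 - t/2) hmem
      simp only at h
      have harg : (1 - t/2) * v + (1 - (1 - t/2)) * u = -c*t + v := by rw [hc]; ring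
      rw [harg] at h
      have e2 : 1 - (1 - t/2) = t/2 := by ring
      rw [e2] at h
      exact h
  -- final assembly
  have habs : |(c * P + (-c * Q))/2| ≤ (c/2) * (|P| + |Q|) := by
    rw [abs_div, abs_of_pos (by norm_num : (0:ℝ) < 2)]
    have : |c * P + (-c * Q)| ≤ |c * P| + |(-c) * Q| := abs_add_le _ _
    rw [abs_mul, abs_mul, abs_of_pos hcpos, abs_neg, abs_of_pos hcpos] at this
    calc |c * P + -c * Q| / 2 ≤ (c * |P| + c * |Q|)/2 := by
          rw [show (-c*Q) = (-c)*Q from by ring] at this ⊢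
          linarith
      _ = (c/2) * (|P| + |Q|) := by ring
  refine le_trans habs ?_
  have comb : (c/2) * (|P| + |Q|) ≤ (c/2) * ((1/2) * (1/(2^(s-1)*((s+1)*(s+2))))^(1/r) *
      ((2*l^2 - 2*l + 1) ^ (1-1/r) * (E * |f' u| ^ r + L * |f' v| ^ r) ^ (1/r))
      + (1/2) * (1/(2^(s-1)*((s+1)*(s+2))))^(1/r) *
      ((2*m^2 - 2*m + 1) ^ (1-1/r) * (I * |f' u| ^ r + F * |f' v| ^ r) ^ (1/r))) := by
    refine mul_le_mul_of_nonneg_left ?_ (by linarith [hcpos.le])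
    exact add_le_add bP bQ
  refine le_trans comb (le_of_eq ?_)
  rw [hc, show (2:ℝ)^(s-1)*(s+1)*(s+2) = 2^(s-1)*((s+1)*(s+2)) from by ring]
  ring
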